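/- Let B ∈ 𝒩𝒮_n and let C ∈ 𝒩𝒮_n satisfy CᵀB = Δ, where Δ is an integer diagonal matrix with strictly positive diagonal entries. Then r(B) + r(C) = ℤ^{1×n} if and only if r(B) ∩ r(C) = r(Δ). -/

import Mathlib

open Matrix

/-- An `n × n` integer matrix is weakly nonsingular if it has rank `n` and
every column is unimodular (the gcd of the entries of each column is `1`). -/
def WeaklyNonsingular {n : ℕ} (B : Matrix (Fin n) (Fin n) ℤ) : Prop :=
  B.rank = n ∧ ∀ j : Fin n, Finset.univ.gcd (fun i => B i j) = 1

/-- The row space `r(A)` of a matrix: the subgroup (submodule) of `ℤ^{1×n}`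
consisting of all `v * A`. -/
def rowSpace {m n : ℕ} (A : Matrix (Fin m) (Fin n) ℤ) : Submodule ℤ (Fin n → ℤ) :=
  LinearMap.range A.vecMulLinear

lemma vecMulLinear_inj {n : ℕ} {A : Matrix (Fin n) (Fin n) ℤ} (hA : A.det ≠ 0) :
    Function.Injective A.vecMulLinear := by
  rw [← LinearMap.ker_eq_bot]
  ext v
  simp only [LinearMap.mem_ker, Matrix.vecMulLinear_apply, Submodule.mem_bot]
  constructor
  · intro hv
    have h1 : v ᵥ* (A * A.adjugate) = 0 := by
      rw [← Matrix.vecMul_vecMul, hv, Matrix.zero_vecMul]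
    rw [Matrix.mul_adjugate] at h1
    have h2 : A.det • v = 0 := by
      simpa [Matrix.vecMul_smul, Matrix.vecMul_one] using h1
    exact (smul_eq_zero.mp h2).resolve_left hA
  · rintro rfl; simp

lemma index_rowSpace {n : ℕ} (A : Matrix (Fin n) (Fin n) ℤ)
    (hinj : Function.Injective A.vecMulLinear) :
    (rowSpace A).toAddSubgroup.index = A.det.natAbs := by
  classical
  set N : Submodule ℤ (Fin n → ℤ) := rowSpace A with hN
  obtain ⟨k, snf⟩ := N.smithNormalForm (Pi.basisFun ℤ (Fin n))
  let e : (Fin n → ℤ) ≃ₗ[ℤ] N := LinearEquiv.ofInjective A.vecMulLinear hinj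
  have hk : k = n := by
    have h1 : Module.finrank ℤ N = k := by
      rw [Module.finrank_eq_card_basis snf.bN, Fintype.card_fin]
    have h2 : Module.finrank ℤ N = n := by
      rw [← e.finrank_eq, Module.finrank_pi, Fintype.card_fin]
    omega
  subst hk
  -- index side
  have hidx : N.toAddSubgroup.index = ∏ i, (snf.a i).natAbs := by
    rw [snf.toAddSubgroup_index_eq_ite]
    simp only [Fintype.card_fin, if_pos rfl]
    refine Finset.prod_congr rfl fun i _ => ?_
    rw [Ideal.span_singleton_toAddSubgroup_eq_zmultiples, Int.index_zmultiples]
  -- det side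
  let σ : Equiv.Perm (Fin k) := Equiv.ofBijective ⇑snf.f
    ((Fintype.bijective_iff_injective_and_card _).mpr ⟨snf.f.injective, rfl⟩)
  let e₂ : (Fin k → ℤ) ≃ₗ[ℤ] N := snf.bM.equiv snf.bN (Equiv.refl (Fin k))
  have hcomp : (N.subtype ∘ₗ (e : (Fin k → ℤ) →ₗ[ℤ] N)) = A.vecMulLinear := by
    refine LinearMap.ext fun v => ?_
    exact LinearEquiv.ofInjective_apply (h := hinj) A.vecMulLinear v
  have hAssoc : Associated (LinearMap.det A.vecMulLinear)
      (LinearMap.det (N.subtype ∘ₗ (e₂ : (Fin k → ℤ) →ₗ[ℤ] N))) := by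
    rw [← hcomp]
    exact LinearMap.associated_det_comp_equiv N.subtype e e₂
  have hmat : LinearMap.toMatrix snf.bM snf.bM (N.subtype ∘ₗ (e₂ : (Fin k → ℤ) →ₗ[ℤ] N))
      = (Matrix.diagonal snf.a).submatrix σ.symm id := by
    ext j i
    rw [LinearMap.toMatrix_apply]
    have happ : (N.subtype ∘ₗ (e₂ : (Fin k → ℤ) →ₗ[ℤ] N)) (snf.bM i)
        = snf.a i • snf.bM (σ i) := by
      simp only [LinearMap.comp_apply, LinearEquiv.coe_coe]
      have h3 : e₂ (snf.bM i) = snf.bN i := by simp [e₂]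
      rw [h3]
      have := snf.snf i
      simpa [σ, Equiv.ofBijective] using this
    rw [happ, _root_.map_smul, Module.Basis.repr_self, Matrix.submatrix_apply, Finsupp.smul_single,
      smul_eq_mul, mul_one, id_eq]
    by_cases hji : j = σ i
    · subst hji
      rw [Finsupp.single_eq_same]
      simp [Matrix.diagonal, σ]
    · rw [Finsupp.single_eq_of_ne hji, Matrix.diagonal_apply_ne']
      intro hc
      exact hji (by rw [hc, Equiv.apply_symm_apply])
  have hdet1 : (LinearMap.det A.vecMulLinear).natAbs = ∏ i, (snf.a i).natAbs := by
    rw [Int.natAbs_eq_iff_associated.mpr hAssoc, ← LinearMap.det_toMatrix snf.bM, hmat,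
      Matrix.det_permute, Matrix.det_diagonal]
    have hp : (∏ i, snf.a i).natAbs = ∏ i, (snf.a i).natAbs :=
      map_prod Int.natAbsHom snf.a Finset.univ
    rcases Int.units_eq_one_or (Equiv.Perm.sign σ.symm) with hs | hs <;>
      rw [hs] <;> simpa [Int.natAbs_mul] using hp
  have hdetA : (LinearMap.det A.vecMulLinear).natAbs = A.det.natAbs := by
    rw [← Matrix.mulVecLin_transpose, ← Matrix.toLin'_apply', LinearMap.det_toLin',
      Matrix.det_transpose]
  rw [hidx, ← hdet1, hdetA]

lemma relindex_map_map {G H : Type*} [AddCommGroup G] [AddCommGroup H]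
    (f : G →+ H) (hf : Function.Injective f) (P Q : AddSubgroup G) :
    (P.map f).relIndex (Q.map f) = P.relIndex Q := by
  have := AddSubgroup.relIndex_comap (H := P.map f) f Q
  rw [AddSubgroup.comap_map_eq_self_of_injective hf] at this
  exact this.symm

lemma rowSpace_mul {n : ℕ} (A B : Matrix (Fin n) (Fin n) ℤ) :
    rowSpace (A * B) = Submodule.map B.vecMulLinear (rowSpace A) := by
  have hcomp : (A * B).vecMulLinear = B.vecMulLinear ∘ₗ A.vecMulLinear := by
    apply LinearMap.ext
    intro v
    simp only [LinearMap.comp_apply, Matrix.vecMulLinear_apply]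
    exact (Matrix.vecMul_vecMul v A B).symm
  rw [rowSpace, hcomp, LinearMap.range_comp]
  rfl

theorem stmt8 {n : ℕ} (B C : Matrix (Fin n) (Fin n) ℤ)
    (hB : WeaklyNonsingular B) (hC : WeaklyNonsingular C)
    (m : Fin n → ℤ) (hm : ∀ i, 0 < m i)
    (h : Cᵀ * B = Matrix.diagonal m) :
    (rowSpace B ⊔ rowSpace C = ⊤)
      ↔ (rowSpace B ⊓ rowSpace C = rowSpace (Matrix.diagonal m)) := by
  classical
  have hprod : (∏ i, m i) ≠ 0 := Finset.prod_ne_zero_iff.mpr fun i _ => (hm i).ne'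
  have hdetmul : Cᵀ.det * B.det = ∏ i, m i := by
    rw [← Matrix.det_mul, h, Matrix.det_diagonal]
  have hB0 : B.det ≠ 0 := fun h0 => hprod (by rw [← hdetmul, h0, mul_zero])
  have hC0 : C.det ≠ 0 := fun h0 => hprod (by
    rw [← hdetmul, Matrix.det_transpose, h0, zero_mul])
  have hCT0 : Cᵀ.det ≠ 0 := by rwa [Matrix.det_transpose]
  have hBinj := vecMulLinear_inj hB0
  have hCinj := vecMulLinear_inj hC0
  have hCTinj := vecMulLinear_inj hCT0
  have hsymm : Bᵀ * C = Matrix.diagonal m := by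
    have := congrArg Matrix.transpose h
    simpa [Matrix.transpose_mul, Matrix.diagonal_transpose] using this
  have hΔB : rowSpace (Matrix.diagonal m) = Submodule.map B.vecMulLinear (rowSpace Cᵀ) := by
    rw [← h, rowSpace_mul]
  have hΔC : rowSpace (Matrix.diagonal m) = Submodule.map C.vecMulLinear (rowSpace Bᵀ) := by
    rw [← hsymm, rowSpace_mul]
  -- submodule-level inclusions
  have hS1 : rowSpace (Matrix.diagonal m) ≤ rowSpace B := by
    rw [hΔB]
    rintro x hx
    obtain ⟨y, -, rfl⟩ := Submodule.mem_map.mp hx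
    exact LinearMap.mem_range.mpr ⟨y, rfl⟩
  have hS2 : rowSpace (Matrix.diagonal m) ≤ rowSpace C := by
    rw [hΔC]
    rintro x hx
    obtain ⟨y, -, rfl⟩ := Submodule.mem_map.mp hx
    exact LinearMap.mem_range.mpr ⟨y, rfl⟩
  set L1 := (rowSpace B).toAddSubgroup with hL1
  set L2 := (rowSpace C).toAddSubgroup with hL2
  set D := (rowSpace (Matrix.diagonal m)).toAddSubgroup with hD
  have hDle1 : D ≤ L1 := (Submodule.toAddSubgroup_le _ _).mpr hS1
  have hDle2 : D ≤ L2 := (Submodule.toAddSubgroup_le _ _).mpr hS2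
  have hb : L1.index = B.det.natAbs := index_rowSpace B hBinj
  have hc : L2.index = C.det.natAbs := index_rowSpace C hCinj
  have hbne : L1.index ≠ 0 := by rw [hb]; exact Int.natAbs_ne_zero.mpr hB0
  have hcne : L2.index ≠ 0 := by rw [hc]; exact Int.natAbs_ne_zero.mpr hC0
  -- relIndex D L1 = |det C|
  have hmapD : D = AddSubgroup.map (B.vecMulLinear : (Fin n → ℤ) →+ (Fin n → ℤ))
      (rowSpace Cᵀ).toAddSubgroup := by
    rw [hD, hΔB, Submodule.map_toAddSubgroup]
  have hmapL1 : L1 = AddSubgroup.map (B.vecMulLinear : (Fin n → ℤ) →+ (Fin n → ℤ))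
      ((⊤ : Submodule ℤ (Fin n → ℤ)).toAddSubgroup) := by
    rw [hL1, ← Submodule.map_toAddSubgroup]
    congr 1
    rw [Submodule.map_top]
    rfl
  have hrel1 : D.relIndex L1 = C.det.natAbs := by
    rw [hmapD, hmapL1, relindex_map_map _ hBinj, Submodule.top_toAddSubgroup,
      AddSubgroup.relIndex_top_right, index_rowSpace Cᵀ hCTinj, Matrix.det_transpose]
  -- arithmetic
  have e1 : D.relIndex L1 * L1.index = D.index := AddSubgroup.relIndex_mul_index hDle1
  have hDleInf : D ≤ L1 ⊓ L2 := le_inf hDle1 hDle2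
  have e2 : D.relIndex (L1 ⊓ L2) * (L1 ⊓ L2).index = D.index :=
    AddSubgroup.relIndex_mul_index hDleInf
  have e3 : (L1 ⊓ L2).relIndex L1 * L1.index = (L1 ⊓ L2).index :=
    AddSubgroup.relIndex_mul_index inf_le_left
  have e4 : (L1 ⊓ L2).relIndex L1 = L2.relIndex L1 := AddSubgroup.inf_relIndex_left _ _
  have e5 : L2.relIndex (L1 ⊔ L2) * (L1 ⊔ L2).index = L2.index :=
    AddSubgroup.relIndex_mul_index le_sup_right
  have e6 : L2.relIndex (L1 ⊔ L2) = L2.relIndex L1 := AddSubgroup.relIndex_sup_right L1 L2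
  set x := (L1 ⊔ L2).index with hx
  set y := D.relIndex (L1 ⊓ L2) with hy
  set t := L2.relIndex L1 with ht
  have hInf : (L1 ⊓ L2).index = t * L1.index := by rw [← e3, e4]
  have key1 : y * t = C.det.natAbs := by
    have h1 : y * (t * L1.index) = C.det.natAbs * L1.index := by
      rw [← hInf, e2, ← e1, hrel1]
    rw [← mul_assoc] at h1
    exact Nat.eq_of_mul_eq_mul_right (Nat.pos_of_ne_zero hbne) h1
  have key2 : t * x = C.det.natAbs := by rw [← hc, ← e5, e6]
  have htne : t ≠ 0 := fun h0 => hcne (by rw [hc, ← key2, h0, zero_mul])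
  have hxy : x = y := by
    have h2 : t * x = t * y := by rw [key2, ← key1, mul_comm]
    exact Nat.eq_of_mul_eq_mul_left (Nat.pos_of_ne_zero htne) h2
  constructor
  · intro hsup
    have hsupA : L1 ⊔ L2 = ⊤ := by
      rw [hL1, hL2, ← Submodule.sup_toAddSubgroup, hsup, Submodule.top_toAddSubgroup]
    have hx1 : x = 1 := by rw [hx, hsupA, AddSubgroup.index_top]
    have hy1 : D.relIndex (L1 ⊓ L2) = 1 := by rw [← hy, ← hxy, hx1]
    have hle : L1 ⊓ L2 ≤ D := AddSubgroup.relIndex_eq_one.mp hy1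
    refine le_antisymm ?_ (le_inf hS1 hS2)
    intro z hz
    exact hle (⟨hz.1, hz.2⟩ : z ∈ L1 ⊓ L2)
  · intro hinf
    have hle : L1 ⊓ L2 ≤ D := by
      intro z hz
      have hzS : z ∈ rowSpace B ⊓ rowSpace C := ⟨hz.1, hz.2⟩
      rw [hinf] at hzS
      exact hzS
    have hy1 : y = 1 := by rw [hy]; exact AddSubgroup.relIndex_eq_one.mpr hle
    have hx1 : (L1 ⊔ L2).index = 1 := by rw [← hx, hxy, hy1]
    apply Submodule.toAddSubgroup_injective
    rw [Submodule.sup_toAddSubgroup, Submodule.top_toAddSubgroup]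
    exact AddSubgroup.index_eq_one.mp hx1
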